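/- The Fresnel integral ∫_{-∞}^{∞} e^{(i/2)x²} dx exists as an improper Riemann integral (equivalently, as a Henstock–Kurzweil integral) and equals √(2π/(-i)), i.e. √(2π)·e^{iπ/4}. -/

import Mathlib

open MeasureTheory Filter Real Set
open scoped Topology

namespace FresnelAux
open Complex

lemma norm_cexp_le {b : ℂ} (hb : 0 ≤ b.re) (x : ℝ) :
    ‖Complex.exp (-b * (x:ℂ)^2)‖ ≤ 1 := by
  rw [Complex.norm_exp, Real.exp_le_one_iff]
  have : ((x:ℂ)^2) = ((x^2 : ℝ) : ℂ) := by push_cast; ring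
  rw [this]
  simp only [neg_mul, neg_re, Complex.mul_re, Complex.ofReal_re, Complex.ofReal_im,
    mul_zero, sub_zero]
  nlinarith [sq_nonneg x]

lemma ibp_bound {b : ℂ} (hb : 0 < b.re) (hb2 : 1/2 ≤ ‖b‖)
    {a R : ℝ} (ha : 0 < a) (hR : a ≤ R) :
    ‖∫ x in a..R, Complex.exp (-b * (x:ℂ)^2)‖ ≤ 2 / a := by
  have hbne : b ≠ 0 := by
    intro h; rw [h] at hb; simp at hb
  have hIcc : Set.uIcc a R = Set.Icc a R := Set.uIcc_of_le hR
  have hpos : ∀ x ∈ Set.uIcc a R, (0:ℝ) < x := by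
    intro x hx; rw [hIcc] at hx; exact lt_of_lt_of_le ha hx.1
  set u : ℝ → ℂ := fun x => (-2 * b * (x:ℂ))⁻¹ with hu_def
  set u' : ℝ → ℂ := fun x => (2 * b * (x:ℂ)^2)⁻¹ with hu'_def
  set v : ℝ → ℂ := fun x => Complex.exp (-b * (x:ℂ)^2) with hv_def
  set v' : ℝ → ℂ := fun x => (-2 * b * (x:ℂ)) * Complex.exp (-b * (x:ℂ)^2) with hv'_def
  have hu : ∀ x ∈ Set.uIcc a R, HasDerivAt u (u' x) x := by
    intro x hx
    have hx0 : (x:ℂ) ≠ 0 := by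
      exact_mod_cast ne_of_gt (hpos x hx)
    have h1 : HasDerivAt (fun z : ℂ => (-2 * b * z)⁻¹)
        (-(-2*b) / (-2*b*(x:ℂ))^2) (x:ℂ) := by
      have := ((hasDerivAt_id ((x:ℂ))).const_mul (-2*b)).inv
        (by simp [hbne, hx0])
      exact this.congr_deriv (by simp only [id, mul_one])
    have := h1.comp_ofReal
    convert this using 1
    rw [hu'_def]
    field_simp
  have hv : ∀ x ∈ Set.uIcc a R, HasDerivAt v (v' x) x := by
    intro x hx
    have h1 : HasDerivAt (fun z : ℂ => Complex.exp (-b * z^2))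
        (Complex.exp (-b * (x:ℂ)^2) * (-b * (2 * (x:ℂ)))) (x:ℂ) := by
      exact (((hasDerivAt_pow 2 ((x:ℂ))).const_mul (-b)).cexp).congr_deriv (by ring)
    have := h1.comp_ofReal
    convert this using 1
    rw [hv'_def]; ring
  have hvc : Continuous v' := by fun_prop
  have hv'int : IntervalIntegrable v' volume a R := hvc.intervalIntegrable a R
  have hu'c : ContinuousOn u' (Set.uIcc a R) := by
    apply ContinuousOn.inv₀
    · fun_prop
    · intro x hx
      have hx0 : (x:ℂ) ≠ 0 := by exact_mod_cast ne_of_gt (hpos x hx)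
      simp [hbne, hx0]
  have hu'int : IntervalIntegrable u' volume a R := hu'c.intervalIntegrable
  have key := intervalIntegral.integral_mul_deriv_eq_deriv_mul hu hv hu'int hv'int
  have heq : (∫ x in a..R, Complex.exp (-b * (x:ℂ)^2)) = ∫ x in a..R, u x * v' x := by
    apply intervalIntegral.integral_congr
    intro x hx
    have hx0 : (x:ℂ) ≠ 0 := by exact_mod_cast ne_of_gt (hpos x hx)
    rw [hu_def, hv'_def]
    simp only []
    rw [inv_mul_cancel_left₀ (by simp [hbne, hx0])]
  rw [heq, key]
  set B := ‖b‖ with hB_def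
  have hB : (1:ℝ)/2 ≤ B := hb2
  have hB0 : (0:ℝ) < B := lt_of_lt_of_le (by norm_num) hB
  have hR0 : (0:ℝ) < R := lt_of_lt_of_le ha hR
  -- norms of boundary terms
  have hbound : ∀ x : ℝ, 0 < x → ‖u x * v x‖ ≤ (2 * B * x)⁻¹ := by
    intro x hx
    rw [norm_mul]
    have h1 : ‖u x‖ = (2 * B * x)⁻¹ := by
      rw [hu_def]
      simp only [norm_inv, norm_mul, norm_neg, Complex.norm_ofNat, Complex.norm_real,
        Real.norm_eq_abs, abs_of_pos hx]
      rfl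
    calc ‖u x‖ * ‖v x‖ ≤ ‖u x‖ * 1 := by
          exact mul_le_mul_of_nonneg_left (norm_cexp_le hb.le x) (norm_nonneg _)
      _ = (2 * B * x)⁻¹ := by rw [mul_one, h1]
  -- norm of integral term
  have hint : ‖∫ x in a..R, u' x * v x‖ ≤ (2*B)⁻¹ * (a⁻¹ - R⁻¹) := by
    have hg : ∀ x ∈ Set.Ioc a R, ‖u' x * v x‖ ≤ (2*B)⁻¹ * (x^2)⁻¹ := by
      intro x hx
      have hxpos : 0 < x := lt_trans ha hx.1
      rw [norm_mul]
      have h1 : ‖u' x‖ = (2*B)⁻¹ * (x^2)⁻¹ := by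
        rw [hu'_def]
        simp only [norm_inv, norm_mul, norm_pow, Complex.norm_ofNat, Complex.norm_real,
          Real.norm_eq_abs, abs_of_pos hxpos]
        rw [mul_inv]
      calc ‖u' x‖ * ‖v x‖ ≤ ‖u' x‖ * 1 :=
            mul_le_mul_of_nonneg_left (norm_cexp_le hb.le x) (norm_nonneg _)
        _ = (2*B)⁻¹ * (x^2)⁻¹ := by rw [mul_one, h1]
    have hgint : IntervalIntegrable (fun x : ℝ => (2*B)⁻¹ * (x^2)⁻¹) volume a R := by
      apply ContinuousOn.intervalIntegrable
      apply ContinuousOn.mul continuousOn_const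
      apply ContinuousOn.inv₀ (by fun_prop)
      intro x hx
      have := hpos x hx
      positivity
    have h2 := intervalIntegral.norm_integral_le_abs_of_norm_le (μ := volume)
      (f := fun x => u' x * v x) (g := fun x : ℝ => (2*B)⁻¹ * (x^2)⁻¹) ?_ hgint
    · have hval : (∫ x in a..R, (2*B)⁻¹ * (x^2)⁻¹) = (2*B)⁻¹ * (a⁻¹ - R⁻¹) := by
        rw [intervalIntegral.integral_const_mul]
        have : (∫ x in a..R, (x^2)⁻¹) = (-R⁻¹) - (-a⁻¹) := by
          apply intervalIntegral.integral_eq_sub_of_hasDerivAt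
          · intro x hx
            have hx0 : x ≠ 0 := ne_of_gt (hpos x hx)
            exact (hasDerivAt_inv hx0).neg.congr_deriv (by ring)
          · apply ContinuousOn.intervalIntegrable
            apply ContinuousOn.inv₀ (by fun_prop)
            intro x hx
            have := hpos x hx; positivity
        rw [this]; ring
      rw [hval] at h2
      refine le_trans h2 ?_
      have h3 : R⁻¹ ≤ a⁻¹ := inv_anti₀ ha hR
      rw [_root_.abs_of_nonneg (mul_nonneg (by positivity) (by linarith) : (0:ℝ) ≤ (2*B)⁻¹ * (a⁻¹ - R⁻¹))]
    · rw [Set.uIoc_of_le hR]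
      exact (ae_restrict_iff' measurableSet_Ioc).mpr (Filter.Eventually.of_forall hg)
  have step : ‖u R * v R - u a * v a - ∫ x in a..R, u' x * v x‖ ≤
      (2*B*R)⁻¹ + (2*B*a)⁻¹ + (2*B)⁻¹ * (a⁻¹ - R⁻¹) := by
    calc ‖u R * v R - u a * v a - ∫ x in a..R, u' x * v x‖
        ≤ ‖u R * v R - u a * v a‖ + ‖∫ x in a..R, u' x * v x‖ := norm_sub_le _ _
      _ ≤ (‖u R * v R‖ + ‖u a * v a‖) + ‖∫ x in a..R, u' x * v x‖ := by
          gcongr; exact norm_sub_le _ _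
      _ ≤ ((2*B*R)⁻¹ + (2*B*a)⁻¹) + (2*B)⁻¹ * (a⁻¹ - R⁻¹) := by
          gcongr
          · exact hbound R hR0
          · exact hbound a ha
      _ = _ := by ring
  refine le_trans step ?_
  have e1 : (2*B*R)⁻¹ + (2*B*a)⁻¹ + (2*B)⁻¹ * (a⁻¹ - R⁻¹) = (B*a)⁻¹ := by
    field_simp
    ring
  rw [e1]
  have hBi : B⁻¹ ≤ 2 := by
    rw [show (2:ℝ) = ((1:ℝ)/2)⁻¹ by norm_num]
    exact inv_anti₀ (by norm_num) hB
  rw [mul_inv, div_eq_mul_inv]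
  exact mul_le_mul_of_nonneg_right hBi (by positivity)


lemma gauss_tail {ε : ℝ} (hε : 0 < ε) {a : ℝ} (ha : 0 < a) :
    ‖(∫ x in (-a)..a, Complex.exp (-((ε:ℂ) - Complex.I/2) * (x:ℂ)^2))
      - (↑π / ((ε:ℂ) - Complex.I/2)) ^ (1/2 : ℂ)‖ ≤ 4 / a := by
  set b : ℂ := (ε:ℂ) - Complex.I/2 with hb_def
  have hbre : 0 < b.re := by
    have : b.re = ε := by
      simp [hb_def, Complex.div_re]
    rw [this]; exact hε
  have habs : (1:ℝ)/2 ≤ ‖b‖ := by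
    have him : b.im = -(1/2) := by
      simp [hb_def, Complex.div_im]
    have := Complex.abs_im_le_norm b
    rw [him] at this
    rw [abs_neg, abs_of_pos (by norm_num : (0:ℝ) < 1/2)] at this
    exact this
  set f : ℝ → ℂ := fun x => Complex.exp (-b * (x:ℂ)^2) with hf_def
  have hcont : Continuous f := by fun_prop
  have hInt : Integrable f := integrable_cexp_neg_mul_sq hbre
  have hlim : Tendsto (fun R : ℝ => ∫ x in (-R)..R, f x) atTop
      (𝓝 ((↑π / b) ^ (1/2 : ℂ))) := by
    have := MeasureTheory.intervalIntegral_tendsto_integral hInt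
      tendsto_neg_atTop_atBot tendsto_id
    rwa [integral_gaussian_complex hbre] at this
  have h2 : Tendsto (fun R : ℝ =>
      ‖(∫ x in (-a)..a, f x) - ∫ x in (-R)..R, f x‖) atTop
      (𝓝 (‖(∫ x in (-a)..a, f x) - (↑π / b) ^ (1/2 : ℂ)‖)) :=
    (tendsto_const_nhds.sub hlim).norm
  refine le_of_tendsto h2 ?_
  filter_upwards [eventually_ge_atTop a] with R hRa
  have hii : ∀ c d : ℝ, IntervalIntegrable f volume c d :=
    fun c d => hcont.intervalIntegrable c d
  have hsplit1 := intervalIntegral.integral_add_adjacent_intervals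
    (hii (-R) (-a)) (hii (-a) a)
  have hsplit2 := intervalIntegral.integral_add_adjacent_intervals
    (a := -R) (b := a) (c := R) ((hii (-R) (-a)).trans (hii (-a) a)) (hii a R)
  have hneg : (∫ x in (-R)..(-a), f x) = ∫ x in a..R, f x := by
    have := intervalIntegral.integral_comp_neg (a := a) (b := R) f
    rw [← this]
    apply intervalIntegral.integral_congr
    intro x _
    simp only [hf_def]
    norm_num
  have key : (∫ x in (-a)..a, f x) - ∫ x in (-R)..R, f x
      = -((∫ x in (-R)..(-a), f x) + ∫ x in a..R, f x) := by
    rw [← hsplit2, ← hsplit1]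
    ring
  rw [key, norm_neg]
  calc ‖(∫ x in (-R)..(-a), f x) + ∫ x in a..R, f x‖
      ≤ ‖∫ x in (-R)..(-a), f x‖ + ‖∫ x in a..R, f x‖ := norm_add_le _ _
    _ ≤ 2/a + 2/a := by
        rw [hneg]
        have hb3 := ibp_bound hbre habs ha hRa
        exact add_le_add hb3 hb3
    _ = 4/a := by ring


lemma fresnel_vs_gauss {ε a : ℝ} (hε : 0 < ε) (ha : 0 ≤ a) :
    ‖(∫ x in (-a)..a, Complex.exp (Complex.I/2 * (x:ℂ)^2))
      - ∫ x in (-a)..a, Complex.exp (-((ε:ℂ) - Complex.I/2) * (x:ℂ)^2)‖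
      ≤ ε * (2/3 * a^3) := by
  have h1 : Continuous (fun x:ℝ => Complex.exp (Complex.I/2 * (x:ℂ)^2)) := by fun_prop
  have h2 : Continuous (fun x:ℝ => Complex.exp (-((ε:ℂ) - Complex.I/2) * (x:ℂ)^2)) := by
    fun_prop
  rw [← intervalIntegral.integral_sub (h1.intervalIntegrable _ _) (h2.intervalIntegrable _ _)]
  have hbd := intervalIntegral.norm_integral_le_abs_of_norm_le (μ := volume) (a := -a) (b := a)
    (f := fun x:ℝ => Complex.exp (Complex.I/2 * (x:ℂ)^2)
      - Complex.exp (-((ε:ℂ) - Complex.I/2) * (x:ℂ)^2))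
    (g := fun x : ℝ => ε * x^2) ?_ ?_
  · refine le_trans hbd ?_
    have hval : (∫ x in (-a)..a, ε * x^2) = ε * (2/3 * a^3) := by
      rw [intervalIntegral.integral_const_mul, integral_pow]
      ring
    rw [hval, _root_.abs_of_nonneg (by positivity)]
  · apply (ae_restrict_iff' measurableSet_uIoc).mpr
    apply Filter.Eventually.of_forall
    intro x _
    show ‖Complex.exp (Complex.I/2 * (x:ℂ)^2)
      - Complex.exp (-((ε:ℂ) - Complex.I/2) * (x:ℂ)^2)‖ ≤ ε * x^2
    have hsplit : Complex.exp (-((ε:ℂ) - Complex.I/2) * (x:ℂ)^2)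
        = Complex.exp (Complex.I/2 * (x:ℂ)^2) * Complex.exp ((((-(ε*x^2)):ℝ):ℂ)) := by
      rw [← Complex.exp_add]
      congr 1
      push_cast
      ring
    rw [hsplit, show Complex.exp (Complex.I/2 * (x:ℂ)^2)
        - Complex.exp (Complex.I/2 * (x:ℂ)^2) * Complex.exp ((((-(ε*x^2)):ℝ):ℂ))
        = Complex.exp (Complex.I/2 * (x:ℂ)^2) * (1 - Complex.exp ((((-(ε*x^2)):ℝ):ℂ))) by ring]
    rw [norm_mul]
    have hn1 : ‖Complex.exp (Complex.I/2 * (x:ℂ)^2)‖ = 1 := by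
      have hcast : (Complex.I/2 * (x:ℂ)^2) = ((x^2/2 : ℝ):ℂ) * Complex.I := by push_cast; ring
      rw [Complex.norm_exp, hcast]
      simp [Complex.mul_re, Complex.mul_im, Complex.ofReal_re, Complex.ofReal_im,
        Complex.I_re, Complex.I_im, pow_two]
    rw [hn1, one_mul]
    rw [← Complex.ofReal_exp, show (1 : ℂ) = ((1:ℝ):ℂ) by norm_num, ← Complex.ofReal_sub,
      Complex.norm_real]
    rw [Real.norm_eq_abs, _root_.abs_of_nonneg (by simp [Real.exp_le_one_iff]; positivity)]
    have := Real.add_one_le_exp (-(ε*x^2))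
    nlinarith
  · apply Continuous.intervalIntegrable
    fun_prop

lemma cpow_value : ((2*(π:ℂ)*Complex.I : ℂ)) ^ (1/2 : ℂ)
    = ((Real.sqrt (2*π) : ℝ) : ℂ) * Complex.exp (Complex.I * (π:ℝ) / 4) := by
  have h2π : (0:ℝ) < 2*π := by positivity
  have hne : (2*(π:ℂ)*Complex.I : ℂ) ≠ 0 := by
    simp [Complex.I_ne_zero, Real.pi_ne_zero]
  rw [Complex.cpow_def_of_ne_zero hne]
  have hlog : Complex.log (2*(π:ℂ)*Complex.I) = ((Real.log (2*π) : ℝ):ℂ) + (π:ℂ)/2 * Complex.I := by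
    have h : (2*(π:ℂ)*Complex.I : ℂ) = ((2*π : ℝ):ℂ) * Complex.I := by push_cast; ring
    rw [h, Complex.log_ofReal_mul h2π Complex.I_ne_zero, Complex.log_I]
  rw [hlog, show ((((Real.log (2*π)):ℝ):ℂ) + (π:ℂ)/2 * Complex.I) * (1/2 : ℂ)
      = (((Real.log (2*π)/2 : ℝ)):ℂ) + Complex.I * (π:ℝ)/4 by push_cast; ring]
  rw [Complex.exp_add]
  congr 1
  have hs : Real.exp (Real.log (2*π)/2) = Real.sqrt (2*π) := by
    rw [show Real.sqrt (2*π) = (2*π) ^ (1/2 : ℝ) from Real.sqrt_eq_rpow _,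
      Real.rpow_def_of_pos h2π]
    congr 1
    ring
  rw [← hs, Complex.ofReal_exp]

lemma tends_cpow : Tendsto
    (fun a : ℝ => ((π:ℂ) / ((((a^4)⁻¹ : ℝ):ℂ) - Complex.I/2)) ^ (1/2:ℂ)) atTop
    (𝓝 (((Real.sqrt (2*π) : ℝ):ℂ) * Complex.exp (Complex.I * (π:ℝ)/4))) := by
  rw [← cpow_value]
  have h0 : Tendsto (fun a:ℝ => ((a^4)⁻¹ : ℝ)) atTop (𝓝 0) :=
    (tendsto_pow_atTop (by norm_num)).inv_tendsto_atTop
  have h1 : Tendsto (fun a:ℝ => ((((a^4)⁻¹ : ℝ)):ℂ) - Complex.I/2) atTop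
      (𝓝 (((0:ℝ):ℂ) - Complex.I/2)) :=
    ((Complex.continuous_ofReal.tendsto 0).comp h0).sub tendsto_const_nhds
  have hne : (((0:ℝ):ℂ) - Complex.I/2) ≠ 0 := by
    simp [Complex.ext_iff]
  have h2 : Tendsto (fun a:ℝ => (π:ℂ) / ((((a^4)⁻¹ : ℝ):ℂ) - Complex.I/2)) atTop
      (𝓝 ((π:ℂ) / (((0:ℝ):ℂ) - Complex.I/2))) :=
    tendsto_const_nhds.div h1 hne
  have hval : ((π:ℂ) / (((0:ℝ):ℂ) - Complex.I/2)) = 2*(π:ℂ)*Complex.I := by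
    rw [div_eq_iff hne]
    push_cast
    linear_combination (π:ℂ) * Complex.I_sq
  rw [hval] at h2
  have hslit : (2*(π:ℂ)*Complex.I) ∈ Complex.slitPlane := by
    rw [Complex.mem_slitPlane_iff]
    right
    simp [Real.pi_ne_zero]
  exact (continuousAt_cpow_const hslit).tendsto.comp h2

end FresnelAux

open FresnelAux in
/-- The Fresnel integral `∫_{-∞}^{∞} e^{(i/2)x²} dx` exists as an improper Riemann
(Henstock–Kurzweil) integral and equals `√(2π/(-i)) = √(2π)·e^{iπ/4}`. -/
theorem fresnel_integral_exists_and_eq :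
    Tendsto (fun a : ℝ => ∫ x in (-a)..a, Complex.exp (Complex.I / 2 * (x : ℂ) ^ 2))
      atTop
      (nhds ((Real.sqrt (2 * Real.pi) : ℂ) * Complex.exp (Complex.I * Real.pi / 4))) := by
  set L : ℂ := ((Real.sqrt (2 * Real.pi) : ℝ):ℂ) * Complex.exp (Complex.I * Real.pi / 4) with hL
  set h : ℝ → ℂ := fun a => ((π:ℂ) / ((((a^4)⁻¹ : ℝ):ℂ) - Complex.I/2)) ^ (1/2:ℂ) with hh
  rw [tendsto_iff_norm_sub_tendsto_zero]
  apply squeeze_zero' (g := fun a : ℝ => 2/3 * a⁻¹ + 4/a + ‖h a - L‖)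
  · exact Filter.Eventually.of_forall fun a => norm_nonneg _
  · filter_upwards [eventually_ge_atTop 1] with a ha1
    have ha0 : (0:ℝ) < a := lt_of_lt_of_le one_pos ha1
    have hε : (0:ℝ) < (a^4)⁻¹ := by positivity
    have t1 := fresnel_vs_gauss (ε := (a^4)⁻¹) hε ha0.le
    have t2 := gauss_tail (ε := (a^4)⁻¹) hε ha0
    calc ‖(∫ x in (-a)..a, Complex.exp (Complex.I / 2 * (x:ℂ)^2)) - L‖
        ≤ ‖(∫ x in (-a)..a, Complex.exp (Complex.I / 2 * (x:ℂ)^2))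
            - ∫ x in (-a)..a, Complex.exp (-((((a^4)⁻¹:ℝ):ℂ) - Complex.I/2) * (x:ℂ)^2)‖
          + ‖(∫ x in (-a)..a, Complex.exp (-((((a^4)⁻¹:ℝ):ℂ) - Complex.I/2) * (x:ℂ)^2))
            - h a‖
          + ‖h a - L‖ := by
            rw [show (∫ x in (-a)..a, Complex.exp (Complex.I / 2 * (x:ℂ)^2)) - L
              = ((∫ x in (-a)..a, Complex.exp (Complex.I / 2 * (x:ℂ)^2))
                 - ∫ x in (-a)..a, Complex.exp (-((((a^4)⁻¹:ℝ):ℂ) - Complex.I/2) * (x:ℂ)^2))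
                + ((∫ x in (-a)..a, Complex.exp (-((((a^4)⁻¹:ℝ):ℂ) - Complex.I/2) * (x:ℂ)^2))
                   - h a)
                + (h a - L) by ring]
            exact norm_add₃_le
      _ ≤ (a^4)⁻¹ * (2/3 * a^3) + 4/a + ‖h a - L‖ := by
          gcongr
      _ = 2/3 * a⁻¹ + 4/a + ‖h a - L‖ := by
          have ha' : a ≠ 0 := ne_of_gt ha0
          rw [show ((a:ℝ)^4)⁻¹ * (2/3 * a^3) = 2/3 * a⁻¹ by
            field_simp <;> ring]
  · have g1 : Tendsto (fun a:ℝ => 2/3 * a⁻¹) atTop (𝓝 (2/3 * 0)) :=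
      tendsto_inv_atTop_zero.const_mul _
    have g2 : Tendsto (fun a:ℝ => 4/a) atTop (𝓝 0) :=
      tendsto_const_nhds.div_atTop tendsto_id
    have g3 : Tendsto (fun a:ℝ => ‖h a - L‖) atTop (𝓝 0) :=
      tendsto_iff_norm_sub_tendsto_zero.mp tends_cpow
    have := (g1.add g2).add g3
    simpa using this
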